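/- Let k ≥ 2 be an integer, q = e^{2πi/(k+2)}, R̃ = diag(i q^{-1/2}, -i q^{1/2}), and F = (√q/(q+1))·[[-1, √(q+1/q+1)], [√(q+1/q+1), 1]]. Then the matrix A = R̃² F R̃⁴ F has trace tr(A) = -2 - 2cos(4π/(k+2)) + 2cos(2π/(k+2)). -/

import Mathlib

set_option maxHeartbeats 1000000

open Complex Matrix

theorem trace_A (k : ℕ) (hk : 2 ≤ k)
    (q : ℂ) (hq : q = Complex.exp (2 * Real.pi * Complex.I / ((k : ℂ) + 2)))
    (sq : ℂ) (hsq : sq = Complex.exp (Real.pi * Complex.I / ((k : ℂ) + 2)))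
    (s : ℂ) (hs : s ^ 2 = q + q⁻¹ + 1)
    (R F A : Matrix (Fin 2) (Fin 2) ℂ)
    (hR : R = !![Complex.I * sq⁻¹, 0; 0, -Complex.I * sq])
    (hF : F = (sq / (q + 1)) • !![-1, s; s, 1])
    (hA : A = R ^ 2 * F * R ^ 4 * F) :
    A.trace = -2 - 2 * Real.cos (4 * Real.pi / ((k : ℝ) + 2))
      + 2 * Real.cos (2 * Real.pi / ((k : ℝ) + 2)) := by
  have hk' : (2 : ℝ) ≤ (k : ℝ) := by exact_mod_cast hk
  have hn : ((k : ℂ) + 2) ≠ 0 := by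
    have h : ((k : ℂ) + 2) = ((k + 2 : ℕ) : ℂ) := by push_cast; ring
    rw [h]
    exact Nat.cast_ne_zero.mpr (by omega)
  have hq0 : q ≠ 0 := by rw [hq]; exact Complex.exp_ne_zero _
  have hsq0 : sq ≠ 0 := by rw [hsq]; exact Complex.exp_ne_zero _
  have hsq2 : sq ^ 2 = q := by
    rw [hsq, hq, ← Complex.exp_nat_mul]
    ring_nf
  have e1 : q = Complex.exp ((↑(2 * Real.pi / ((k : ℝ) + 2)) : ℂ) * Complex.I) := by
    rw [hq]; congr 1; push_cast; ring
  have hq1 : q + 1 ≠ 0 := by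
    intro h
    have hqm : q = -1 := by linear_combination h
    have hre : q.re = Real.cos (2 * Real.pi / ((k : ℝ) + 2)) := by
      rw [e1, Complex.exp_ofReal_mul_I_re]
    have hcos : Real.cos (2 * Real.pi / ((k : ℝ) + 2)) = -1 := by
      rw [← hre, hqm]; norm_num
    have hθ : 0 ≤ 2 * Real.pi / ((k : ℝ) + 2) := by positivity
    have hθ' : 2 * Real.pi / ((k : ℝ) + 2) ≤ Real.pi / 2 := by
      rw [div_le_div_iff₀ (by positivity) (by norm_num)]
      nlinarith [Real.pi_pos]
    have := Real.cos_nonneg_of_mem_Icc ⟨by linarith [Real.pi_pos, hθ], hθ'⟩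
    rw [hcos] at this; linarith
  have e2 : Complex.exp (-(↑(2 * Real.pi / ((k : ℝ) + 2)) : ℂ) * Complex.I) = q⁻¹ := by
    rw [e1, ← Complex.exp_neg]; congr 1; ring
  have e4 : Complex.exp ((↑(4 * Real.pi / ((k : ℝ) + 2)) : ℂ) * Complex.I) = q ^ 2 := by
    rw [hq, ← Complex.exp_nat_mul]; congr 1; push_cast; ring
  have e4' : Complex.exp (-(↑(4 * Real.pi / ((k : ℝ) + 2)) : ℂ) * Complex.I) = (q ^ 2)⁻¹ := by
    rw [← e4, ← Complex.exp_neg]; congr 1; ring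
  have h2 : (2 : ℂ) * Real.cos (2 * Real.pi / ((k : ℝ) + 2)) = q + q⁻¹ := by
    rw [Complex.ofReal_cos, Complex.two_cos, e2, ← e1]
  have h4 : (2 : ℂ) * Real.cos (4 * Real.pi / ((k : ℝ) + 2)) = q ^ 2 + (q ^ 2)⁻¹ := by
    rw [Complex.ofReal_cos, Complex.two_cos, e4, e4']
  have hlhs : A.trace = q + q⁻¹ - q ^ 2 - (q ^ 2)⁻¹ - 2 := by
    subst hA hR hF
    simp [Matrix.trace_fin_two, pow_succ, Matrix.mul_fin_two, Matrix.smul_apply]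
    have hsqi : sq⁻¹ = sq / q := by
      field_simp
      linear_combination -hsq2
    have hs' : s ^ 2 * q = q ^ 2 + q + 1 := by
      field_simp at hs
      linear_combination hs
    rw [hsqi, inv_eq_one_div]
    ring_nf
    field_simp
    ring_nf
    have hI6 : Complex.I ^ 6 = -1 := by
      rw [show (6:ℕ) = 2*3 from rfl, pow_mul, Complex.I_sq]; norm_num
    have h8 : sq ^ 8 = q ^ 4 := by rw [show (8:ℕ) = 2*4 from rfl, pow_mul, hsq2]
    rw [hI6, h8]
    have hD : (1 + q * 2 + q ^ 2) ≠ 0 := by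
      rw [show 1 + q * 2 + q ^ 2 = (q + 1) ^ 2 by ring]; exact pow_ne_zero _ hq1
    have hinv : (1 + q * 2 + q ^ 2) * (1 + q * 2 + q ^ 2)⁻¹ = 1 := mul_inv_cancel₀ hD
    linear_combination (-q^4 * (q + q^3) * (1 + q * 2 + q ^ 2)⁻¹) * hs'
      + (-q^4 * (1 - q + 2*q^2 - q^3 + q^4)) * hinv
  rw [hlhs]
  linear_combination h4 - h2
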